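/- arXiv:1904.06745 — 2 statements merged into one kernel-verified Lean document; each statement's English description precedes it below -/
import Mathlib

section
/- There exists N such that for all n ≥ N the following holds: for every real α with 0 < α ≤ 1/2 and α·2^n an integer, and every δ ∈ [0,1], the variance of the noise sensitivity over a random function from H^α satisfies Var_{f∼H^α}[NS_δ[f]] ≤ 100·α/2^n. -/
open Finset

/-- Level (Hamming weight) of a point of the Boolean cube. -/
def level {n : ℕ} (x : Fin n → Bool) : ℕ :=
  (Finset.univ.filter (fun i => x i = true)).card

/-- Probability, under the noise distribution `T_δ`, of obtaining the pair `(x, z)`: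
`x` is uniform on `{0,1}^n` and each coordinate of `z` independently equals the
corresponding coordinate of `x` with probability `1 − δ` and is flipped with
probability `δ`. -/
noncomputable def noisePairProb (n : ℕ) (δ : ℝ) (x z : Fin n → Bool) : ℝ :=
  (1 / 2 ^ n) * ∏ i : Fin n, (if z i = x i then 1 - δ else δ)

/-- Noise sensitivity: `NS_δ[f] = Pr_{(x,z)∼T_δ}[f(x) ≠ f(z)]`. -/
noncomputable def NS (n : ℕ) (δ : ℝ) (f : (Fin n → Bool) → Bool) : ℝ :=
  ∑ x : Fin n → Bool, ∑ z : Fin n → Bool,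
    noisePairProb n δ x z * (if f x ≠ f z then 1 else 0)

/-- Influence: `I[f] = n · Pr_{x, i}[f(x) ≠ f(x^{⊕i})]`. -/
noncomputable def influence (n : ℕ) (f : (Fin n → Bool) → Bool) : ℝ :=
  (1 / 2 ^ n) * ∑ x : Fin n → Bool, ∑ i : Fin n,
    (if f x ≠ f (Function.update x i (!(x i))) then (1 : ℝ) else 0)

/-- Bias: `B[f] = Pr_{x uniform}[f(x) = 1]`. -/
noncomputable def bias (n : ℕ) (f : (Fin n → Bool) → Bool) : ℝ :=
  (1 / 2 ^ n) * ∑ x : Fin n → Bool, (if f x = true then (1 : ℝ) else 0)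

/-- The support of the distribution `H^α`: all functions `f : {0,1}^n → {0,1}`
with exactly `α·2^n` points mapped to `1`.  Drawing `f ∼ H^α` means drawing `f`
uniformly from this (finite) set. -/
noncomputable def Hset (n : ℕ) (α : ℝ) : Finset ((Fin n → Bool) → Bool) :=
  Finset.univ.filter (fun f =>
    ((Finset.univ.filter (fun x : Fin n → Bool => f x = true)).card : ℝ) = α * 2 ^ n)

section Aux

variable {n : ℕ}

lemma sum_funBool_prod (g : Fin n → Bool → ℝ) :
    ∑ z : Fin n → Bool, ∏ i, g i (z i) = ∏ i, ∑ b, g i b := by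
  rw [← Fintype.piFinset_univ, Finset.sum_prod_piFinset]

lemma npp_nonneg {δ : ℝ} (h0 : 0 ≤ δ) (h1 : δ ≤ 1) (x z : Fin n → Bool) :
    0 ≤ noisePairProb n δ x z := by
  unfold noisePairProb
  apply mul_nonneg (by positivity)
  apply Finset.prod_nonneg
  intro i _; split <;> linarith

lemma npp_sum_right {δ : ℝ} (x : Fin n → Bool) :
    ∑ z : Fin n → Bool, noisePairProb n δ x z = 1 / 2 ^ n := by
  unfold noisePairProb
  rw [← Finset.mul_sum,
    sum_funBool_prod (fun i b => if b = x i then (1:ℝ) - δ else δ)]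
  have h : ∀ i : Fin n, (∑ b : Bool, if b = x i then (1:ℝ) - δ else δ) = 1 := by
    intro i; cases h : x i <;> simp [Fintype.sum_bool] <;> ring
  rw [Finset.prod_congr rfl (fun i _ => h i)]
  simp

lemma npp_sum_left {δ : ℝ} (z : Fin n → Bool) :
    ∑ x : Fin n → Bool, noisePairProb n δ x z = 1 / 2 ^ n := by
  unfold noisePairProb
  rw [← Finset.mul_sum,
    sum_funBool_prod (fun i b => if z i = b then (1:ℝ) - δ else δ)]
  have h : ∀ i : Fin n, (∑ b : Bool, if z i = b then (1:ℝ) - δ else δ) = 1 := by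
    intro i; cases h : z i <;> simp [Fintype.sum_bool] <;> ring
  rw [Finset.prod_congr rfl (fun i _ => h i)]
  simp


variable {α : Type*} [Fintype α] [DecidableEq α]

/-- Counting subsets of fixed size containing `A` and disjoint from `B`. -/
lemma card_slice_constrained (A B : Finset α) (hAB : Disjoint A B) (m : ℕ) (hA : A.card ≤ m) :
    (univ.filter (fun s : Finset α => s.card = m ∧ A ⊆ s ∧ Disjoint B s)).card
      = (Fintype.card α - (A.card + B.card)).choose (m - A.card) := by
  have hBu : B ⊆ univ \ A := by
    intro x hx
    simp only [Finset.mem_sdiff, Finset.mem_univ, true_and]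
    exact fun hxA => (Finset.disjoint_left.mp hAB) hxA hx
  have hcard : ((univ \ A) \ B).card = Fintype.card α - (A.card + B.card) := by
    rw [Finset.card_sdiff_of_subset hBu, Finset.card_sdiff_of_subset (Finset.subset_univ A), Finset.card_univ]
    omega
  rw [← hcard, ← Finset.card_powersetCard]
  apply Finset.card_bij (fun s _ => s \ A)
  · intro s hs
    simp only [mem_filter, mem_univ, true_and] at hs
    obtain ⟨hc, hAs, hBs⟩ := hs
    rw [Finset.mem_powersetCard]
    constructor
    · intro x hx
      simp only [Finset.mem_sdiff, Finset.mem_univ, true_and] at hx ⊢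
      exact ⟨hx.2, fun hxB => (Finset.disjoint_left.mp hBs) hxB hx.1⟩
    · rw [Finset.card_sdiff_of_subset hAs, hc]
  · intro s hs t ht h
    simp only [mem_filter, mem_univ, true_and] at hs ht
    have := congrArg (· ∪ A) h
    simpa [Finset.sdiff_union_of_subset hs.2.1, Finset.sdiff_union_of_subset ht.2.1] using this
  · intro t ht
    rw [Finset.mem_powersetCard] at ht
    obtain ⟨hsub, hcardt⟩ := ht
    have htA : Disjoint t A := by
      rw [Finset.disjoint_left]; intro x hx hxA
      have := hsub hx; simp [Finset.mem_sdiff] at this; exact this.1 hxA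
    have htB : Disjoint t B := by
      rw [Finset.disjoint_left]; intro x hx hxB
      have := hsub hx; simp [Finset.mem_sdiff] at this; exact this.2 hxB
    refine ⟨t ∪ A, ?_, ?_⟩
    · simp only [mem_filter, mem_univ, true_and]
      refine ⟨?_, Finset.subset_union_right, ?_⟩
      · rw [Finset.card_union_of_disjoint htA, hcardt]
        omega
      · rw [Finset.disjoint_union_right]
        exact ⟨htB.symm, hAB.symm⟩
    · rw [Finset.union_sdiff_right, Finset.sdiff_eq_self_of_disjoint htA]


def ones (f : α → Bool) : Finset α := univ.filter (fun x => f x = true)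

lemma mem_ones {f : α → Bool} {x : α} : x ∈ ones f ↔ f x = true := by
  simp [ones]

lemma card_filter_fun (P : Finset α → Prop) [DecidablePred P] :
    (univ.filter (fun f : α → Bool => P (ones f))).card = (univ.filter P).card := by
  apply Finset.card_bij (fun f _ => ones f)
  · intro f hf
    simp only [mem_filter, mem_univ, true_and] at hf ⊢
    exact hf
  · intro f hf g hg h
    funext x
    have : x ∈ ones f ↔ x ∈ ones g := by rw [h]
    rw [mem_ones, mem_ones] at this
    exact Bool.eq_iff_iff.mpr this  -- name check
  · intro s hs
    refine ⟨fun x => decide (x ∈ s), ?_, ?_⟩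
    · simp only [mem_filter, mem_univ, true_and] at hs ⊢
      convert hs using 2
      ext x
      simp [ones]
    · ext x
      simp [ones]

/-- main counting lemma for functions -/
lemma count_fun (A B : Finset α) (hAB : Disjoint A B) (k : ℕ) (hA : A.card ≤ k) :
    (univ.filter (fun f : α → Bool =>
        (ones f).card = k ∧ (∀ a ∈ A, f a = true) ∧ (∀ b ∈ B, f b = false))).card
      = (Fintype.card α - (A.card + B.card)).choose (k - A.card) := by
  have : (univ.filter (fun f : α → Bool =>
        (ones f).card = k ∧ (∀ a ∈ A, f a = true) ∧ (∀ b ∈ B, f b = false)))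
      = (univ.filter (fun f : α → Bool =>
        (fun s => s.card = k ∧ A ⊆ s ∧ Disjoint B s) (ones f))) := by
    apply Finset.filter_congr
    intro f _
    simp only []
    constructor
    · rintro ⟨h1, h2, h3⟩
      refine ⟨h1, fun a ha => mem_ones.mpr (h2 a ha), ?_⟩
      rw [Finset.disjoint_left]
      intro b hb hbo
      rw [mem_ones] at hbo
      rw [h3 b hb] at hbo
      exact Bool.false_ne_true hbo
    · rintro ⟨h1, h2, h3⟩
      refine ⟨h1, fun a ha => mem_ones.mp (h2 ha), fun b hb => ?_⟩
      have := Finset.disjoint_left.mp h3 hb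
      rw [mem_ones] at this
      exact Bool.eq_false_iff.mpr (fun h => this h)  -- f b ≠ true → f b = false
  rw [this,
    card_filter_fun (fun s : Finset α => s.card = k ∧ A ⊆ s ∧ Disjoint B s)]
  exact card_slice_constrained A B hAB k hA


lemma count0 (k : ℕ) :
    (univ.filter (fun f : α → Bool => (ones f).card = k)).card
      = (Fintype.card α).choose k := by
  have h := count_fun (∅ : Finset α) ∅ (by simp) k (by simp)
  simpa using h

lemma count1 (t : α) (k : ℕ) (hk : 1 ≤ k) :
    (univ.filter (fun f : α → Bool => (ones f).card = k ∧ f t = true)).card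
      = (Fintype.card α - 1).choose (k-1) := by
  have h := count_fun ({t} : Finset α) ∅ (by simp) k (by simpa using hk)
  simpa using h

lemma count2 (a b : α) (hab : a ≠ b) (k : ℕ) (hk : 1 ≤ k) :
    (univ.filter (fun f : α → Bool => (ones f).card = k ∧ f a = true ∧ f b = false)).card
      = (Fintype.card α - 2).choose (k-1) := by
  have h := count_fun ({a} : Finset α) ({b} : Finset α) (by simpa using hab) k (by simpa using hk)
  simpa using h

lemma count4 (a b c d : α) (hab : a ≠ b) (hcd : c ≠ d) (hac : a ≠ c) (had : a ≠ d)
    (hbc : b ≠ c) (hbd : b ≠ d) (k : ℕ) (hk : 2 ≤ k) :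
    (univ.filter (fun f : α → Bool => (ones f).card = k ∧
        (f a = true ∧ f b = false) ∧ (f c = true ∧ f d = false))).card
      = (Fintype.card α - 4).choose (k-2) := by
  have hA : ({a, c} : Finset α).card = 2 := by
    rw [Finset.card_insert_of_notMem (by simp [hac]), Finset.card_singleton]
  have hB : ({b, d} : Finset α).card = 2 := by
    rw [Finset.card_insert_of_notMem (by simp [hbd]), Finset.card_singleton]
  have hdisj : Disjoint ({a, c} : Finset α) ({b, d} : Finset α) := by
    simp [Finset.disjoint_left, hab, had, hbd, hcd.symm]  -- check
    tauto
  have h := count_fun ({a, c} : Finset α) ({b, d} : Finset α) hdisj k (by omega)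
  rw [hA, hB] at h
  rw [← h]
  apply congrArg Finset.card
  apply Finset.filter_congr
  intro f _
  simp only [Finset.mem_insert, Finset.mem_singleton, forall_eq_or_imp, forall_eq]
  tauto


lemma disj_filter_aux (P Q : (α → Bool) → Prop) [DecidablePred P] [DecidablePred Q] (a : α)
    (hP : ∀ f, P f → f a = true) (hQ : ∀ f, Q f → f a = false) :
    Disjoint (univ.filter P) (univ.filter Q) := by
  rw [Finset.disjoint_left]
  intro f hf1 hf2
  simp only [Finset.mem_filter] at hf1 hf2
  have := hP f hf1.2
  rw [hQ f hf2.2] at this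
  exact Bool.false_ne_true this

/-- sum over the slice of the indicator of `f t = true` -/
lemma Ssingle (t : α) (k : ℕ) (hk : 1 ≤ k) :
    ∑ f ∈ univ.filter (fun f : α → Bool => (ones f).card = k),
      (if f t = true then (1:ℝ) else 0)
      = ((Fintype.card α - 1).choose (k-1) : ℝ) := by
  rw [Finset.sum_boole, Finset.filter_filter]
  rw [count1 t k hk]

lemma Spair (x z : α) (hxz : x ≠ z) (k : ℕ) (hk : 1 ≤ k) :
    ∑ f ∈ univ.filter (fun f : α → Bool => (ones f).card = k),
      (if f x ≠ f z then (1:ℝ) else 0)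
      = 2 * ((Fintype.card α - 2).choose (k-1) : ℝ) := by
  rw [Finset.sum_boole, Finset.filter_filter]
  have hsplit : (univ.filter (fun f : α → Bool => (ones f).card = k ∧ f x ≠ f z))
      = (univ.filter (fun f : α → Bool => ((ones f).card = k ∧ f x = true ∧ f z = false)
          ∨ ((ones f).card = k ∧ f z = true ∧ f x = false))) := by
    apply Finset.filter_congr
    intro f _
    cases hx : f x <;> cases hz : f z <;> simp [hx, hz]
  rw [hsplit, Finset.filter_or, Finset.card_union_of_disjoint
    (disj_filter_aux _ _ x (fun f hf => hf.2.1) (fun f hf => hf.2.2))]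
  rw [count2 x z hxz k hk, count2 z x hxz.symm k hk]
  push_cast; ring

lemma Squad (x z x' z' : α) (hxz : x ≠ z) (hx'z' : x' ≠ z')
    (h1 : x' ≠ x) (h2 : x' ≠ z) (h3 : z' ≠ x) (h4 : z' ≠ z)
    (k : ℕ) (hk : 2 ≤ k) :
    ∑ f ∈ univ.filter (fun f : α → Bool => (ones f).card = k),
      (if (f x ≠ f z) ∧ (f x' ≠ f z') then (1:ℝ) else 0)
      = 4 * ((Fintype.card α - 4).choose (k-2) : ℝ) := by
  rw [Finset.sum_boole, Finset.filter_filter]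
  have hsplit : (univ.filter (fun f : α → Bool => (ones f).card = k ∧ ((f x ≠ f z) ∧ (f x' ≠ f z'))))
      = (univ.filter (fun f : α → Bool =>
          ((ones f).card = k ∧ (f x = true ∧ f z = false) ∧ (f x' = true ∧ f z' = false))
        ∨ (((ones f).card = k ∧ (f x = true ∧ f z = false) ∧ (f z' = true ∧ f x' = false))
        ∨ (((ones f).card = k ∧ (f z = true ∧ f x = false) ∧ (f x' = true ∧ f z' = false))
        ∨ ((ones f).card = k ∧ (f z = true ∧ f x = false) ∧ (f z' = true ∧ f x' = false)))))) := by
    apply Finset.filter_congr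
    intro f _
    cases hx : f x <;> cases hz : f z <;> cases hx' : f x' <;> cases hz' : f z' <;>
      simp [hx, hz, hx', hz']
  rw [hsplit, Finset.filter_or, Finset.filter_or, Finset.filter_or]
  rw [Finset.card_union_of_disjoint ?hD1, Finset.card_union_of_disjoint ?hD2,
    Finset.card_union_of_disjoint ?hD3]
  case hD3 => exact disj_filter_aux _ _ x' (fun f hf => hf.2.2.1) (fun f hf => hf.2.2.2)
  case hD2 =>
    rw [Finset.disjoint_union_right]
    exact ⟨disj_filter_aux _ _ x (fun f hf => hf.2.1.1) (fun f hf => hf.2.1.2),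
      disj_filter_aux _ _ x (fun f hf => hf.2.1.1) (fun f hf => hf.2.1.2)⟩
  case hD1 =>
    rw [Finset.disjoint_union_right, Finset.disjoint_union_right]
    exact ⟨disj_filter_aux _ _ x' (fun f hf => hf.2.2.1) (fun f hf => hf.2.2.2),
      disj_filter_aux _ _ x (fun f hf => hf.2.1.1) (fun f hf => hf.2.1.2),
      disj_filter_aux _ _ x (fun f hf => hf.2.1.1) (fun f hf => hf.2.1.2)⟩
  rw [count4 x z x' z' hxz hx'z' h1.symm h3.symm h2.symm h4.symm k hk,
    count4 x z z' x' hxz hx'z'.symm h3.symm h1.symm h4.symm h2.symm k hk,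
    count4 z x x' z' hxz.symm hx'z' h2.symm h4.symm h1.symm h3.symm k hk,
    count4 z x z' x' hxz.symm hx'z'.symm h4.symm h2.symm h3.symm h1.symm k hk]
  push_cast; ring

lemma Squad0 (x z x' z' : α) (hxz : x ≠ z) (hx'z' : x' ≠ z')
    (h1 : x' ≠ x) (h2 : x' ≠ z) (h3 : z' ≠ x) (h4 : z' ≠ z)
    (k : ℕ) (hk : k < 2) :
    ∑ f ∈ univ.filter (fun f : α → Bool => (ones f).card = k),
      (if (f x ≠ f z) ∧ (f x' ≠ f z') then (1:ℝ) else 0)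
      = 0 := by
  rw [Finset.sum_boole, Finset.filter_filter]
  norm_cast
  rw [Finset.card_eq_zero, Finset.filter_eq_empty_iff]
  rintro f -
  rintro ⟨hcard, hp, hq⟩
  have e1 : ∃ a, (a = x ∨ a = z) ∧ f a = true := by
    cases hx : f x
    · cases hz : f z
      · rw [hx, hz] at hp; exact absurd rfl hp
      · exact ⟨z, Or.inr rfl, hz⟩
    · exact ⟨x, Or.inl rfl, hx⟩
  have e2 : ∃ a, (a = x' ∨ a = z') ∧ f a = true := by
    cases hx : f x'
    · cases hz : f z'
      · rw [hx, hz] at hq; exact absurd rfl hq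
      · exact ⟨z', Or.inr rfl, hz⟩
    · exact ⟨x', Or.inl rfl, hx⟩
  obtain ⟨a, ha, hfa⟩ := e1
  obtain ⟨b, hb, hfb⟩ := e2
  have hab : a ≠ b := by
    rintro rfl
    rcases ha with rfl | rfl <;> rcases hb with h | h <;> simp_all
  have : 1 < (ones f).card := by
    apply Finset.one_lt_card.mpr
    exact ⟨a, by simp [ones, hfa], b, by simp [ones, hfb], hab⟩
  omega


lemma choose_symm_pq (p q : ℕ) : (p+q).choose q = (p+q).choose p := by
  have := Nat.choose_symm (Nat.le_add_left q p)
  rw [Nat.add_sub_cancel] at this; exact this.symm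

/-- additive form of hypergeometric ratio identity -/
lemma chooseJ (p q : ℕ) :
    (p+q+2)*(p+q+1)*((p+q).choose p) = (p+1)*(q+1)*((p+q+2).choose (p+1)) := by
  have hA : (p+q+2) * ((p+q+1).choose p) = (p+q+2).choose (p+1) * (p+1) := by
    have := Nat.add_one_mul_choose_eq (p+q+1) p
    simpa [Nat.succ_eq_add_one] using this
  have hB : (p+q+1) * ((p+q).choose p) = (p+q+1).choose p * (q+1) := by
    have := Nat.add_one_mul_choose_eq (p+q) q
    rw [choose_symm_pq p q] at this
    have h2 : (p+q+1).choose (q+1) = (p+q+1).choose p := by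
      have := choose_symm_pq p (q+1)
      rwa [show p + (q+1) = p+q+1 by ring] at this
    rw [h2] at this
    exact this
  calc (p+q+2)*(p+q+1)*((p+q).choose p)
      = (p+q+2) * ((p+q+1) * ((p+q).choose p)) := by ring
    _ = (p+q+2) * ((p+q+1).choose p * (q+1)) := by rw [hB]
    _ = ((p+q+2) * ((p+q+1).choose p)) * (q+1) := by ring
    _ = ((p+q+2).choose (p+1) * (p+1)) * (q+1) := by rw [hA]
    _ = (p+1)*(q+1)*((p+q+2).choose (p+1)) := by ring

/-- M * C(M-1,k-1) = k * C(M,k) in additive form -/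
lemma chooseI (m j : ℕ) : (m+1) * (m.choose j) = (j+1) * ((m+1).choose (j+1)) := by
  have := Nat.add_one_mul_choose_eq m j
  simpa [Nat.succ_eq_add_one, Nat.mul_comm] using this


set_option maxHeartbeats 1000000 in

lemma key_ineq (x u y : ℝ) (hx : 2 ≤ x) (hxu : x ≤ u) (hy' : y = x + u) (hy : 16 ≤ y) :
    4*((x-1)*(u-1)*x*u)/(y*(y-1)*((y-2)*(y-3)))
      - (2*(x*u)/(y*(y-1)))^2 ≤ 64*x/y^2 := by
  have hux : (0:ℝ) < x := by linarith
  have huu : (0:ℝ) < u := by linarith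
  have h1 : (1:ℝ) < y - 3 := by linarith
  have hy0 : (0:ℝ) < y := by linarith
  have hy1 : (0:ℝ) < y - 1 := by linarith
  have hy2 : (0:ℝ) < y - 2 := by linarith
  have hy3 : (0:ℝ) < y - 3 := by linarith
  have hD : (0:ℝ) < y^2*(y-1)^2*((y-2)*(y-3)) := by positivity
  have hxu4 : 4*(x*u) ≤ y^2 := by nlinarith [sq_nonneg (u - x)]
  have hbr : x*u*(4*y-6) - y*(y-1)^2 ≤ y^2/2 := by nlinarith [sq_nonneg (u - x)]
  have hN1 : 4*((x-1)*(u-1)*x*u)*(y*(y-1)) - 4*x^2*u^2*((y-2)*(y-3))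
      ≤ 2*(x*u)*y^2 := by
    have expand : 4*((x-1)*(u-1)*x*u)*(y*(y-1)) - 4*x^2*u^2*((y-2)*(y-3))
        = 4*(x*u)*(x*u*(4*y-6) - y*(y-1)^2) := by rw [hy']; ring
    rw [expand]
    have : 4*(x*u)*(x*u*(4*y-6) - y*(y-1)^2) ≤ 4*(x*u)*(y^2/2) := by
      apply mul_le_mul_of_nonneg_left hbr (by positivity)
    nlinarith [this]
  have hchain : 2*(x*u)*y^2 ≤ 64*x*((y-1)^2*((y-2)*(y-3))) := by
    have h2 : 2*(x*u)*y^2 ≤ 2*x*y^3 := by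
      have := mul_le_mul_of_nonneg_left (show u ≤ y by linarith)
        (show (0:ℝ) ≤ 2*x*y^2 by positivity)
      nlinarith [this]
    have h16 : 16*y^3 ≤ y^4 := by nlinarith [pow_pos hy0 3]
    have h3 : y^3 ≤ 32*((y-1)^2*((y-2)*(y-3))) := by
      nlinarith [mul_nonneg hy0.le hy1.le, pow_pos hy0 3, pow_pos hy0 2]
    nlinarith
  have e1 : 4*((x-1)*(u-1)*x*u)/((y)*(y-1)*((y-2)*(y-3)))
      - (2*(x*u)/((y)*(y-1)))^2
      = (4*((x-1)*(u-1)*x*u)*(y*(y-1)) - 4*x^2*u^2*((y-2)*(y-3)))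
        / (y^2*(y-1)^2*((y-2)*(y-3))) := by
    field_simp
    ring
  have e2 : 64*x/y^2
      = (64*x*((y-1)^2*((y-2)*(y-3)))) / (y^2*(y-1)^2*((y-2)*(y-3))) := by
    field_simp
  rw [e1, e2]
  gcongr
  linarith


set_option maxHeartbeats 2000000 in
lemma cov_bound (k : ℕ) (hk : 1 ≤ k) (hM16 : 16 ≤ Fintype.card α)
    (h2k : 2*k ≤ Fintype.card α) (x z x' z' : α) :
    (∑ f ∈ univ.filter (fun f : α → Bool => (ones f).card = k),
        (if f x ≠ f z then (1:ℝ) else 0) * (if f x' ≠ f z' then (1:ℝ) else 0))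
      / (((univ.filter (fun f : α → Bool => (ones f).card = k)).card : ℝ))
    - (∑ f ∈ univ.filter (fun f : α → Bool => (ones f).card = k),
        (if f x ≠ f z then (1:ℝ) else 0))
      * (∑ f ∈ univ.filter (fun f : α → Bool => (ones f).card = k),
        (if f x' ≠ f z' then (1:ℝ) else 0))
      / (((univ.filter (fun f : α → Bool => (ones f).card = k)).card : ℝ))^2
    ≤ (2*k/(Fintype.card α : ℝ)) * ((if x' = x then (1:ℝ) else 0) + (if x' = z then 1 else 0)
        + (if z' = x then 1 else 0) + (if z' = z then 1 else 0))
      + 64*k/(Fintype.card α : ℝ)^2 := by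
  set H := univ.filter (fun f : α → Bool => (ones f).card = k) with hH
  set M := Fintype.card α with hM
  have hkM : k ≤ M := by omega
  have hcard : H.card = M.choose k := count0 k
  have hCpos : (0:ℝ) < (H.card : ℝ) := by
    rw [hcard]; exact_mod_cast Nat.choose_pos hkM
  have hMpos : (0:ℝ) < (M:ℝ) := by positivity
  -- nonnegativity facts
  have hi1 : (0:ℝ) ≤ (if x' = x then (1:ℝ) else 0) := by split <;> norm_num
  have hi2 : (0:ℝ) ≤ (if x' = z then (1:ℝ) else 0) := by split <;> norm_num
  have hi3 : (0:ℝ) ≤ (if z' = x then (1:ℝ) else 0) := by split <;> norm_num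
  have hi4 : (0:ℝ) ≤ (if z' = z then (1:ℝ) else 0) := by split <;> norm_num
  have hq : (0:ℝ) ≤ 64*k/(M:ℝ)^2 := by positivity
  have h2kM : (0:ℝ) ≤ 2*k/(M:ℝ) := by positivity
  have hS1nonneg : (0:ℝ) ≤ ∑ f ∈ H, (if f x ≠ f z then (1:ℝ) else 0) := by
    apply Finset.sum_nonneg; intro f _; split <;> norm_num
  have hS1nonneg' : (0:ℝ) ≤ ∑ f ∈ H, (if f x' ≠ f z' then (1:ℝ) else 0) := by
    apply Finset.sum_nonneg; intro f _; split <;> norm_num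
  have hprod : ∀ f : α → Bool,
      (if f x ≠ f z then (1:ℝ) else 0) * (if f x' ≠ f z' then (1:ℝ) else 0)
        = (if (f x ≠ f z) ∧ (f x' ≠ f z') then (1:ℝ) else 0) := by
    intro f; split_ifs with h1 h2 h3 <;> simp_all
  have hS2eq : (∑ f ∈ H, (if f x ≠ f z then (1:ℝ) else 0) * (if f x' ≠ f z' then (1:ℝ) else 0))
      = ∑ f ∈ H, (if (f x ≠ f z) ∧ (f x' ≠ f z') then (1:ℝ) else 0) :=
    Finset.sum_congr rfl (fun f _ => hprod f)
  have hS2nonneg : (0:ℝ) ≤ ∑ f ∈ H, (if (f x ≠ f z) ∧ (f x' ≠ f z') then (1:ℝ) else 0) := by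
    apply Finset.sum_nonneg; intro f _; split <;> norm_num
  -- S1 ≤ 2 k/M * card
  have hratio1 : ((M - 1).choose (k-1) : ℝ) * (M:ℝ) = (k:ℝ) * ((M.choose k : ℕ) : ℝ) := by
    obtain ⟨m, hm⟩ : ∃ m, M = m + 1 := ⟨M - 1, by omega⟩
    obtain ⟨j, hj⟩ : ∃ j, k = j + 1 := ⟨k - 1, by omega⟩
    rw [hm, hj]
    have := chooseI m j
    have hc := congrArg (Nat.cast : ℕ → ℝ) this
    have e1 : m + 1 - 1 = m := by omega
    have e2 : j + 1 - 1 = j := by omega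
    rw [e1, e2]
    push_cast at hc ⊢
    linarith [hc]
  have hS1le : ∀ a b : α, (∑ f ∈ H, (if f a ≠ f b then (1:ℝ) else 0)) ≤ 2*(k:ℝ)/(M:ℝ) * (H.card : ℝ) := by
    intro a b
    have hpt : (∑ f ∈ H, (if f a ≠ f b then (1:ℝ) else 0))
        ≤ (∑ f ∈ H, (if f a = true then (1:ℝ) else 0)) + (∑ f ∈ H, (if f b = true then (1:ℝ) else 0)) := by
      rw [← Finset.sum_add_distrib]
      apply Finset.sum_le_sum
      intro f _
      cases ha : f a <;> cases hb : f b <;> simp [ha, hb]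
    rw [hH] at hpt ⊢
    rw [Ssingle a k hk, Ssingle b k hk] at hpt
    rw [← hH] at hpt ⊢
    rw [hcard]
    have : ((M - 1).choose (k-1) : ℝ) = (k:ℝ)/(M:ℝ) * ((M.choose k : ℕ) : ℝ) := by
      rw [div_mul_eq_mul_div, eq_div_iff (ne_of_gt hMpos)]
      linarith [hratio1]
    rw [this] at hpt
    calc (∑ f ∈ H, (if f a ≠ f b then (1:ℝ) else 0))
        ≤ (k:ℝ)/(M:ℝ) * ((M.choose k : ℕ) : ℝ) + (k:ℝ)/(M:ℝ) * ((M.choose k : ℕ) : ℝ) := hpt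
      _ = 2*(k:ℝ)/(M:ℝ) * ((M.choose k : ℕ) : ℝ) := by ring
  rw [hS2eq]
  by_cases hdeg : x = z ∨ x' = z'
  · have hz2 : (∑ f ∈ H, (if (f x ≠ f z) ∧ (f x' ≠ f z') then (1:ℝ) else 0)) = 0 := by
      apply Finset.sum_eq_zero
      intro f _
      rcases hdeg with rfl | rfl <;> simp
    rw [hz2]
    have hn : (0:ℝ) ≤ (∑ f ∈ H, (if f x ≠ f z then (1:ℝ) else 0))
        * (∑ f ∈ H, (if f x' ≠ f z' then (1:ℝ) else 0)) / (H.card:ℝ)^2 := by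
      apply div_nonneg (mul_nonneg hS1nonneg hS1nonneg') (by positivity)
    have hr : (0:ℝ) ≤ (2*k/(M:ℝ)) * ((if x' = x then (1:ℝ) else 0) + (if x' = z then 1 else 0)
        + (if z' = x then 1 else 0) + (if z' = z then 1 else 0)) :=
      mul_nonneg h2kM (by linarith)
    simp only [zero_div]
    linarith
  push_neg at hdeg
  obtain ⟨hxz, hx'z'⟩ := hdeg
  have hmain : ∀ bound : ℝ,
      (∑ f ∈ H, (if (f x ≠ f z) ∧ (f x' ≠ f z') then (1:ℝ) else 0)) / (H.card:ℝ) ≤ bound →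
      (∑ f ∈ H, (if (f x ≠ f z) ∧ (f x' ≠ f z') then (1:ℝ) else 0)) / (H.card:ℝ)
        - (∑ f ∈ H, (if f x ≠ f z then (1:ℝ) else 0))
          * (∑ f ∈ H, (if f x' ≠ f z' then (1:ℝ) else 0)) / (H.card:ℝ)^2 ≤ bound := by
    intro bound hb
    have hn : (0:ℝ) ≤ (∑ f ∈ H, (if f x ≠ f z then (1:ℝ) else 0))
        * (∑ f ∈ H, (if f x' ≠ f z' then (1:ℝ) else 0)) / (H.card:ℝ)^2 :=
      div_nonneg (mul_nonneg hS1nonneg hS1nonneg') (by positivity)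
    linarith
  by_cases hint : x' = x ∨ x' = z ∨ z' = x ∨ z' = z
  · -- intersecting case
    apply hmain
    have hle1 : (∑ f ∈ H, (if (f x ≠ f z) ∧ (f x' ≠ f z') then (1:ℝ) else 0))
        ≤ ∑ f ∈ H, (if f x ≠ f z then (1:ℝ) else 0) := by
      apply Finset.sum_le_sum
      intro f _
      by_cases h : (f x ≠ f z) ∧ (f x' ≠ f z')
      · rw [if_pos h, if_pos h.1]
      · rw [if_neg h]
        split <;> norm_num
    have hle2 : (∑ f ∈ H, (if (f x ≠ f z) ∧ (f x' ≠ f z') then (1:ℝ) else 0)) / (H.card:ℝ)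
        ≤ 2*(k:ℝ)/(M:ℝ) := by
      rw [div_le_iff₀ hCpos]
      calc (∑ f ∈ H, (if (f x ≠ f z) ∧ (f x' ≠ f z') then (1:ℝ) else 0))
          ≤ ∑ f ∈ H, (if f x ≠ f z then (1:ℝ) else 0) := hle1
        _ ≤ 2*(k:ℝ)/(M:ℝ) * (H.card:ℝ) := hS1le x z
    have hone : (1:ℝ) ≤ ((if x' = x then (1:ℝ) else 0) + (if x' = z then 1 else 0)
        + (if z' = x then 1 else 0) + (if z' = z then 1 else 0)) := by
      rcases hint with h|h|h|h <;> rw [if_pos h] <;> linarith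
    have hmul := mul_le_mul_of_nonneg_left hone h2kM
    linarith
  · push_neg at hint
    obtain ⟨hb1, hb2, hb3, hb4⟩ := hint
    by_cases hk2 : 2 ≤ k
    · -- exact covariance computation
      obtain ⟨b, hbk⟩ : ∃ b, k = b + 2 := ⟨k-2, by omega⟩
      obtain ⟨d, hdM⟩ : ∃ d, M = b + d + 4 := ⟨M - k - 2, by omega⟩
      have hbd : b ≤ d := by omega
      have hS2v : (∑ f ∈ H, (if (f x ≠ f z) ∧ (f x' ≠ f z') then (1:ℝ) else 0))
          = 4 * (((M - 4).choose (k-2) : ℕ) : ℝ) := by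
        rw [hH]; exact Squad x z x' z' hxz hx'z' hb1 hb2 hb3 hb4 k hk2
      have hS1v : (∑ f ∈ H, (if f x ≠ f z then (1:ℝ) else 0))
          = 2 * (((M - 2).choose (k-1) : ℕ) : ℝ) := by
        rw [hH]; exact Spair x z hxz k hk
      have hS1v' : (∑ f ∈ H, (if f x' ≠ f z' then (1:ℝ) else 0))
          = 2 * (((M - 2).choose (k-1) : ℕ) : ℝ) := by
        rw [hH]; exact Spair x' z' hx'z' k hk
      have i2 : M - 2 = b + d + 2 := by omega
      have i1 : k - 1 = b + 1 := by omega
      have i4 : M - 4 = b + d := by omega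
      have i3 : k - 2 = b := by omega
      have icard : (H.card : ℝ) = (((b+d+4).choose (b+2) : ℕ) : ℝ) := by
        rw [hcard, hdM, hbk]
      rw [hS2v, hS1v, hS1v', i2, i1, i4, i3, icard]
      have hc0pos : (0:ℝ) < (((b+d+4).choose (b+2) : ℕ) : ℝ) := by
        exact_mod_cast Nat.choose_pos (by omega)
      have h2r : ((b:ℝ)+(d:ℝ)+4)*((b:ℝ)+(d:ℝ)+3)*(((b+d+2).choose (b+1) : ℕ) : ℝ)
          = ((b:ℝ)+2)*((d:ℝ)+2)*(((b+d+4).choose (b+2) : ℕ) : ℝ) := by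
        have h := congrArg (Nat.cast : ℕ → ℝ) (chooseJ (b+1) (d+1))
        rw [show b+1+(d+1) = b+d+2 by omega] at h
        rw [show b+d+2+2 = b+d+4 by omega, show b+d+2+1 = b+d+3 by omega,
          show b+1+1 = b+2 by omega, show d+1+1 = d+2 by omega] at h
        push_cast at h
        linarith [h]
      have h4r : ((b:ℝ)+(d:ℝ)+2)*((b:ℝ)+(d:ℝ)+1)*(((b+d).choose b : ℕ) : ℝ)
          = ((b:ℝ)+1)*((d:ℝ)+1)*(((b+d+2).choose (b+1) : ℕ) : ℝ) := by
        have h := congrArg (Nat.cast : ℕ → ℝ) (chooseJ b d)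
        push_cast at h
        linarith [h]
      have hb0 : (0:ℝ) ≤ (b:ℝ) := Nat.cast_nonneg b
      have hd0 : (0:ℝ) ≤ (d:ℝ) := Nat.cast_nonneg d
      have f1 : (0:ℝ) < ((b:ℝ)+(d:ℝ)+4) := by linarith
      have f2 : (0:ℝ) < ((b:ℝ)+(d:ℝ)+4) - 1 := by linarith
      have f3 : (0:ℝ) < ((b:ℝ)+(d:ℝ)+4) - 2 := by linarith
      have f4 : (0:ℝ) < ((b:ℝ)+(d:ℝ)+4) - 3 := by linarith
      have hden : (0:ℝ) < ((b:ℝ)+(d:ℝ)+4)*(((b:ℝ)+(d:ℝ)+4)-1)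
          *((((b:ℝ)+(d:ℝ)+4)-2)*(((b:ℝ)+(d:ℝ)+4)-3)) :=
        mul_pos (mul_pos f1 f2) (mul_pos f3 f4)
      have e1q : 4*(((b+d).choose b : ℕ) : ℝ)/(((b+d+4).choose (b+2) : ℕ) : ℝ)
          = 4*(((((b:ℝ)+2))-1)*((((d:ℝ)+2))-1)*(((b:ℝ)+2))*(((d:ℝ)+2)))
            /(((b:ℝ)+(d:ℝ)+4)*(((b:ℝ)+(d:ℝ)+4)-1)*((((b:ℝ)+(d:ℝ)+4)-2)*(((b:ℝ)+(d:ℝ)+4)-3))) := by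
        rw [div_eq_div_iff (ne_of_gt hc0pos) (ne_of_gt hden)]
        linear_combination (4*(((b:ℝ)+(d:ℝ)+4)*(((b:ℝ)+(d:ℝ)+4)-1)))*h4r
          + (4*(((b:ℝ)+1)*((d:ℝ)+1)))*h2r
      have e2q : 2*(((b+d+2).choose (b+1) : ℕ) : ℝ)*(2*(((b+d+2).choose (b+1) : ℕ) : ℝ))
            /(((b+d+4).choose (b+2) : ℕ) : ℝ)^2
          = (2*((((b:ℝ)+2))*(((d:ℝ)+2)))/(((b:ℝ)+(d:ℝ)+4)*(((b:ℝ)+(d:ℝ)+4)-1)))^2 := by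
        rw [div_pow, div_eq_div_iff (by positivity) (by positivity)]
        linear_combination (4*((((b+d+2).choose (b+1) : ℕ) : ℝ)*(((b:ℝ)+(d:ℝ)+4)*(((b:ℝ)+(d:ℝ)+4)-1))
          + ((b:ℝ)+2)*((d:ℝ)+2)*(((b+d+4).choose (b+2) : ℕ) : ℝ)))*h2r
      have hkey := key_ineq ((b:ℝ)+2) ((d:ℝ)+2) ((b:ℝ)+(d:ℝ)+4)
        (by linarith) (by exact_mod_cast add_le_add_left ((Nat.cast_le (α := ℝ)).mpr hbd) 2)
        (by ring) (by
          have : (16:ℕ) ≤ b + d + 4 := by omega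
          exact_mod_cast this)
      have hfin : 4*(((b+d).choose b : ℕ) : ℝ)/(((b+d+4).choose (b+2) : ℕ) : ℝ)
          - 2*(((b+d+2).choose (b+1) : ℕ) : ℝ)*(2*(((b+d+2).choose (b+1) : ℕ) : ℝ))
            /(((b+d+4).choose (b+2) : ℕ) : ℝ)^2
          ≤ 64*(k:ℝ)/(M:ℝ)^2 := by
        rw [e1q, e2q]
        have hkeq : (k:ℝ) = ((b:ℝ)+2) := by rw [hbk]; push_cast; ring
        have hMeq : (M:ℝ) = ((b:ℝ)+(d:ℝ)+4) := by rw [hdM]; push_cast; ring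
        rw [hkeq, hMeq]
        exact hkey
      have hmul : (0:ℝ) ≤ 2*(k:ℝ)/(M:ℝ) * ((if x' = x then (1:ℝ) else 0) + (if x' = z then 1 else 0)
          + (if z' = x then 1 else 0) + (if z' = z then 1 else 0)) :=
        mul_nonneg h2kM (by linarith)
      linarith
    · -- k = 1
      have hz2 : (∑ f ∈ H, (if (f x ≠ f z) ∧ (f x' ≠ f z') then (1:ℝ) else 0)) = 0 := by
        rw [hH]; exact Squad0 x z x' z' hxz hx'z' hb1 hb2 hb3 hb4 k (by omega)
      apply hmain
      rw [hz2, zero_div]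
      have hmul : (0:ℝ) ≤ 2*(k:ℝ)/(M:ℝ) * ((if x' = x then (1:ℝ) else 0) + (if x' = z then 1 else 0)
          + (if z' = x then 1 else 0) + (if z' = z then 1 else 0)) :=
        mul_nonneg h2kM (by linarith)
      linarith


end Aux

/-- For all sufficiently large `n`: for every real `α` with `0 < α ≤ 1/2` and
`α·2^n` an integer, and every `δ ∈ [0,1]`, the variance of `NS_δ[f]` over a
uniformly random `f ∼ H^α` is at most `100·α/2^n`. -/
theorem random_function_ns_variance :
    ∃ N : ℕ, ∀ n : ℕ, N ≤ n →
      ∀ α : ℝ, 0 < α → α ≤ 1 / 2 → (∃ k : ℕ, (k : ℝ) = α * 2 ^ n) →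
      ∀ δ : ℝ, 0 ≤ δ → δ ≤ 1 →
        (∑ f ∈ Hset n α, (NS n δ f) ^ 2) / ((Hset n α).card : ℝ)
            - ((∑ f ∈ Hset n α, NS n δ f) / ((Hset n α).card : ℝ)) ^ 2
          ≤ 100 * α / 2 ^ n := by
  use 4
  intro n hn α hα0 hα2 hex δ hδ0 hδ1
  obtain ⟨k, hk⟩ := hex
  have hpow : (0:ℝ) < 2 ^ n := by positivity
  have hcardX : Fintype.card (Fin n → Bool) = 2 ^ n := by
    simp [Fintype.card_fun]
  have hM16 : 16 ≤ Fintype.card (Fin n → Bool) := by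
    rw [hcardX]
    calc (16:ℕ) = 2^4 := by norm_num
      _ ≤ 2^n := Nat.pow_le_pow_right (by norm_num) hn
  have hk1 : 1 ≤ k := by
    by_contra h
    have : k = 0 := by omega
    rw [this] at hk
    simp at hk
    nlinarith
  have h2k : 2*k ≤ Fintype.card (Fin n → Bool) := by
    rw [hcardX]
    have hreal : ((2*k : ℕ) : ℝ) ≤ ((2^n : ℕ) : ℝ) := by
      push_cast
      rw [hk]
      nlinarith
    exact_mod_cast hreal
  have Heq : Hset n α = univ.filter (fun f : (Fin n → Bool) → Bool => (ones f).card = k) := by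
    ext f
    simp only [Hset, ones, Finset.mem_filter, Finset.mem_univ, true_and]
    rw [← hk]
    exact (Nat.cast_inj (R := ℝ)).trans ((Finset.mem_filter (p := fun g : (Fin n → Bool) → Bool => (ones g).card = k)).trans (and_iff_right (Finset.mem_univ _))).symm
  set H := univ.filter (fun f : (Fin n → Bool) → Bool => (ones f).card = k) with hH
  rw [Heq]
  set Cr := (H.card : ℝ) with hCr
  have hCpos : (0:ℝ) < Cr := by
    rw [hCr, count0 k]
    exact_mod_cast Nat.choose_pos (by omega)
  set P : ((Fin n → Bool) × (Fin n → Bool)) → ℝ := fun c => noisePairProb n δ c.1 c.2 with hP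
  set Y : ((Fin n → Bool) × (Fin n → Bool)) → ((Fin n → Bool) → Bool) → ℝ :=
    fun c f => (if f c.1 ≠ f c.2 then (1:ℝ) else 0) with hY
  have hPnonneg : ∀ c, 0 ≤ P c := fun c => npp_nonneg hδ0 hδ1 c.1 c.2
  have hNS : ∀ f, NS n δ f = ∑ c : (Fin n → Bool) × (Fin n → Bool), P c * Y c f := by
    intro f
    rw [NS, Fintype.sum_prod_type]
  -- marginals
  have hPsum : ∑ c : (Fin n → Bool) × (Fin n → Bool), P c = 1 := by
    rw [Fintype.sum_prod_type]
    have : ∀ x : Fin n → Bool, ∑ z : Fin n → Bool, P (x, z) = 1/2^n := fun x => npp_sum_right x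
    rw [Finset.sum_congr rfl (fun x _ => this x), Finset.sum_const, Finset.card_univ, hcardX]
    rw [nsmul_eq_mul]
    push_cast
    field_simp
  have hPm1 : ∀ t, ∑ c : (Fin n → Bool) × (Fin n → Bool), P c * (if c.1 = t then (1:ℝ) else 0)
      = 1/2^n := by
    intro t
    rw [Fintype.sum_prod_type]
    have h1 : ∀ x : Fin n → Bool, ∑ z : Fin n → Bool, P (x, z) * (if x = t then (1:ℝ) else 0)
        = (if x = t then (1/2^n : ℝ) else 0) := by
      intro x
      rw [← Finset.sum_mul, npp_sum_right x]
      split <;> simp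
    rw [Finset.sum_congr rfl (fun x _ => h1 x), Finset.sum_ite_eq' univ t (fun _ => (1/2^n : ℝ))]
    simp
  have hPm2 : ∀ t, ∑ c : (Fin n → Bool) × (Fin n → Bool), P c * (if c.2 = t then (1:ℝ) else 0)
      = 1/2^n := by
    intro t
    rw [Fintype.sum_prod_type]
    have h1 : ∀ x : Fin n → Bool, ∑ z : Fin n → Bool, P (x, z) * (if z = t then (1:ℝ) else 0)
        = P (x, t) := by
      intro x
      have : ∀ z : Fin n → Bool, P (x, z) * (if z = t then (1:ℝ) else 0)
          = (if z = t then P (x, z) else 0) := by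
        intro z; split <;> simp
      rw [Finset.sum_congr rfl (fun z _ => this z), Finset.sum_ite_eq' univ t (fun z => P (x, z))]
      simp
    rw [Finset.sum_congr rfl (fun x _ => h1 x)]
    exact npp_sum_left t
  set S1 : ((Fin n → Bool) × (Fin n → Bool)) → ℝ := fun c => ∑ f ∈ H, Y c f with hS1
  set S2 : ((Fin n → Bool) × (Fin n → Bool)) → ((Fin n → Bool) × (Fin n → Bool)) → ℝ :=
    fun c c' => ∑ f ∈ H, Y c f * Y c' f with hS2
  have sum1 : ∑ f ∈ H, NS n δ f = ∑ c : (Fin n → Bool) × (Fin n → Bool), P c * S1 c := by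
    rw [Finset.sum_congr rfl (fun f _ => hNS f), Finset.sum_comm]
    exact Finset.sum_congr rfl (fun c _ => by rw [Finset.mul_sum])
  have hsq : ∀ f, (NS n δ f)^2 = ∑ c : (Fin n → Bool) × (Fin n → Bool),
      ∑ c' : (Fin n → Bool) × (Fin n → Bool), (P c * P c') * (Y c f * Y c' f) := by
    intro f
    rw [hNS f, sq, Finset.sum_mul_sum]
    exact Finset.sum_congr rfl (fun c _ => Finset.sum_congr rfl (fun c' _ => by ring))
  have sum2 : ∑ f ∈ H, (NS n δ f)^2 = ∑ c : (Fin n → Bool) × (Fin n → Bool),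
      ∑ c' : (Fin n → Bool) × (Fin n → Bool), (P c * P c') * S2 c c' := by
    rw [Finset.sum_congr rfl (fun f _ => hsq f), Finset.sum_comm]
    apply Finset.sum_congr rfl
    intro c _
    rw [Finset.sum_comm]
    apply Finset.sum_congr rfl
    intro c' _
    rw [Finset.mul_sum]
  have expand : (∑ f ∈ H, (NS n δ f)^2)/Cr - ((∑ f ∈ H, NS n δ f)/Cr)^2
      = ∑ c : (Fin n → Bool) × (Fin n → Bool), ∑ c' : (Fin n → Bool) × (Fin n → Bool),
          ((P c * P c') * (S2 c c'/Cr - S1 c * S1 c'/Cr^2)) := by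
    rw [sum1, sum2, div_pow, sq (∑ c : (Fin n → Bool) × (Fin n → Bool), P c * S1 c),
      Finset.sum_mul_sum, Finset.sum_div, Finset.sum_div, ← Finset.sum_sub_distrib]
    apply Finset.sum_congr rfl
    intro c _
    rw [Finset.sum_div, Finset.sum_div, ← Finset.sum_sub_distrib]
    apply Finset.sum_congr rfl
    intro c' _
    ring
  rw [show (∑ f ∈ H, (NS n δ f)^2)/Cr - ((∑ f ∈ H, NS n δ f)/Cr)^2
      = (∑ f ∈ H, (NS n δ f)^2)/Cr - ((∑ f ∈ H, NS n δ f)/Cr)^2 from rfl] at *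
  rw [expand]
  -- termwise bound
  set B : ((Fin n → Bool) × (Fin n → Bool)) → ((Fin n → Bool) × (Fin n → Bool)) → ℝ :=
    fun c c' => (2*k/((2:ℝ)^n)) * ((if c'.1 = c.1 then (1:ℝ) else 0) + (if c'.1 = c.2 then 1 else 0)
        + (if c'.2 = c.1 then 1 else 0) + (if c'.2 = c.2 then 1 else 0))
      + 64*k/((2:ℝ)^n)^2 with hB
  have hterm : ∀ c c' : (Fin n → Bool) × (Fin n → Bool),
      (P c * P c') * (S2 c c'/Cr - S1 c * S1 c'/Cr^2) ≤ (P c * P c') * B c c' := by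
    intro c c'
    apply mul_le_mul_of_nonneg_left _ (mul_nonneg (hPnonneg c) (hPnonneg c'))
    have hcb := cov_bound k hk1 hM16 h2k c.1 c.2 c'.1 c'.2
    rw [hcardX] at hcb
    push_cast at hcb
    exact hcb
  have hbound : (∑ c : (Fin n → Bool) × (Fin n → Bool), ∑ c' : (Fin n → Bool) × (Fin n → Bool),
        ((P c * P c') * (S2 c c'/Cr - S1 c * S1 c'/Cr^2)))
      ≤ ∑ c : (Fin n → Bool) × (Fin n → Bool), ∑ c' : (Fin n → Bool) × (Fin n → Bool),
        ((P c * P c') * B c c') :=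
    Finset.sum_le_sum (fun c _ => Finset.sum_le_sum (fun c' _ => hterm c c'))
  -- compute the bound sum
  have hinner : ∀ c : (Fin n → Bool) × (Fin n → Bool),
      ∑ c' : (Fin n → Bool) × (Fin n → Bool), ((P c * P c') * B c c')
        = P c * (72*k/((2:ℝ)^n)^2) := by
    intro c
    have hexp : ∀ c' : (Fin n → Bool) × (Fin n → Bool), (P c * P c') * B c c'
        = P c * ((2*k/((2:ℝ)^n)) * (P c' * (if c'.1 = c.1 then (1:ℝ) else 0))
          + (2*k/((2:ℝ)^n)) * (P c' * (if c'.1 = c.2 then (1:ℝ) else 0))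
          + (2*k/((2:ℝ)^n)) * (P c' * (if c'.2 = c.1 then (1:ℝ) else 0))
          + (2*k/((2:ℝ)^n)) * (P c' * (if c'.2 = c.2 then (1:ℝ) else 0))
          + (64*k/((2:ℝ)^n)^2) * P c') := by
      intro c'
      rw [hB]
      ring
    rw [Finset.sum_congr rfl (fun c' _ => hexp c'), ← Finset.mul_sum]
    congr 1
    rw [Finset.sum_add_distrib, Finset.sum_add_distrib, Finset.sum_add_distrib,
      Finset.sum_add_distrib, ← Finset.mul_sum, ← Finset.mul_sum, ← Finset.mul_sum,
      ← Finset.mul_sum, ← Finset.mul_sum]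
    rw [hPm1 c.1, hPm1 c.2, hPm2 c.1, hPm2 c.2, hPsum]
    field_simp
    ring
  have htotal : (∑ c : (Fin n → Bool) × (Fin n → Bool), ∑ c' : (Fin n → Bool) × (Fin n → Bool),
        ((P c * P c') * B c c')) = 72*k/((2:ℝ)^n)^2 := by
    rw [Finset.sum_congr rfl (fun c _ => hinner c), ← Finset.sum_mul, hPsum, one_mul]
  have hfinal : (72:ℝ)*k/((2:ℝ)^n)^2 ≤ 100 * α / 2^n := by
    have hα : α = (k:ℝ)/2^n := by
      rw [eq_div_iff (ne_of_gt hpow)]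
      linarith [hk]
    rw [hα]
    have hrw : (100:ℝ) * ((k:ℝ)/2^n)/2^n = 100*(k:ℝ)/((2:ℝ)^n)^2 := by
      field_simp
    rw [hrw]
    have hk0 : (0:ℝ) ≤ (k:ℝ) := Nat.cast_nonneg k
    gcongr
    linarith
  linarith [hbound, htotal, hfinal]
end

section
/- Let n ≥ 1 and w ≥ 1 be integers. Consider the random descending walk: pick x uniformly at random from {0,1}^n; then repeat w times (stopping early if the all-zeros point is reached): pick a uniformly random coordinate of the current point that equals 1 and set it to 0. Let e = (v1, v2) be a fixed hypercube edge with v2 ≺ v1 and L(v1) = ℓ ≥ 1. Then the probability that the walk traverses the edge e (i.e., at some step moves from v1 to v2) equals (Σ_{j=ℓ}^{ℓ+w−1} binom(n, j)) / (2^n · ℓ · binom(n, ℓ)), where binom(n, j) = 0 for j > n. -/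
open Finset

/-- `hitProb n v1 v2 w v` is the probability that the random descending walk of
(at most) `w` steps started at `v` traverses the edge from `v1` to `v2`.  At each
step a uniformly random coordinate of the current point that equals `1` is set to
`0`; the walk stops early at the all-zeros point. -/
noncomputable def hitProb (n : ℕ) (v1 v2 : Fin n → Bool) :
    ℕ → (Fin n → Bool) → ℝ
  | 0, _ => 0
  | w + 1, v =>
    if (Finset.univ.filter (fun i => v i = true)).card = 0 then 0
    else
      (1 / ((Finset.univ.filter (fun i => v i = true)).card : ℝ)) *
        ∑ i ∈ Finset.univ.filter (fun i => v i = true),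
          (if v = v1 ∧ Function.update v i false = v2 then (1 : ℝ)
           else hitProb n v1 v2 w (Function.update v i false))

lemma ones_update_false {n : ℕ} (v : Fin n → Bool) (i : Fin n) :
    Finset.univ.filter (fun j => Function.update v i false j = true)
      = (Finset.univ.filter (fun j => v j = true)).erase i := by
  ext j
  rcases eq_or_ne j i with h | h <;> simp [Function.update_apply, h]

lemma level_le_of_subset {n : ℕ} {v1 v : Fin n → Bool}
    (h : ∀ i, v1 i = true → v i = true) : level v1 ≤ level v := by
  apply Finset.card_le_card
  intro i hi
  simp only [mem_filter, mem_univ, true_and] at *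
  exact h i hi

lemma hitProb_eq {n : ℕ} (v1 v2 : Fin n → Bool) (i0 : Fin n) (hi0 : v1 i0 = true)
    (hv2 : v2 = Function.update v1 i0 false) (ℓ : ℕ) (hlev : level v1 = ℓ) (hℓ : 1 ≤ ℓ) :
    ∀ w v, hitProb n v1 v2 w v =
      if (∀ i, v1 i = true → v i = true) ∧ level v < ℓ + w
      then 1 / ((ℓ : ℝ) * ((level v).choose ℓ)) else 0 := by
  intro w
  induction w with
  | zero =>
    intro v
    rw [hitProb, eq_comm, if_neg]
    rintro ⟨hsub, hlt⟩
    have h := level_le_of_subset hsub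
    omega
  | succ w ih =>
    intro v
    rw [hitProb]
    by_cases hm0 : (Finset.univ.filter (fun i => v i = true)).card = 0
    · rw [if_pos hm0, eq_comm, if_neg]
      rintro ⟨hsub, -⟩
      have h := level_le_of_subset hsub
      have hlv : level v = 0 := hm0
      omega
    · rw [if_neg hm0]
      have hlv : level v = (Finset.univ.filter (fun i => v i = true)).card := rfl
      by_cases hsub : ∀ i, v1 i = true → v i = true
      · have hle : ℓ ≤ level v := hlev ▸ level_le_of_subset hsub
        rcases eq_or_lt_of_le hle with heq | hlt
        · -- v = v1
          have hsets : (Finset.univ.filter (fun i => v1 i = true))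
              = (Finset.univ.filter (fun i => v i = true)) := by
            apply Finset.eq_of_subset_of_card_le
            · intro i hi
              simp only [mem_filter, mem_univ, true_and] at *
              exact hsub i hi
            · rw [← hlv, ← heq, ← hlev]
              exact le_rfl
          have hv : v = v1 := by
            funext i
            have h1 : (i ∈ Finset.univ.filter (fun i => v1 i = true))
                ↔ (i ∈ Finset.univ.filter (fun i => v i = true)) := by rw [hsets]
            simp only [mem_filter, mem_univ, true_and] at h1
            cases hvi : v i <;> cases hv1i : v1 i <;> simp_all
          subst hv
          have hmem : i0 ∈ Finset.univ.filter (fun i => v i = true) := by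
            simp [hi0]
          rw [Finset.sum_eq_single_of_mem i0 hmem]
          · rw [if_pos ⟨rfl, hv2.symm⟩, mul_one, if_pos ⟨fun i h => h, by omega⟩,
              ← heq, Nat.choose_self, Nat.cast_one, mul_one, ← hlv, hlev]
          · intro b hb hbne
            rw [if_neg, ih, if_neg]
            · rintro ⟨hs, -⟩
              have hb' : v b = true := by simpa using hb
              have := hs b hb'
              simp [Function.update_apply] at this
            · rintro ⟨-, hupd⟩
              rw [hv2] at hupd
              have := congrFun hupd i0
              simp [Function.update_apply, hbne.symm, hi0] at this
        · -- ℓ < level v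
          have hne : v ≠ v1 := by
            intro h; rw [h, hlev] at hlt; omega
          have hterm : ∀ i ∈ Finset.univ.filter (fun i => v i = true),
              (if v = v1 ∧ Function.update v i false = v2 then (1:ℝ)
               else hitProb n v1 v2 w (Function.update v i false))
              = if v1 i = false ∧ level v - 1 < ℓ + w
                then 1 / ((ℓ : ℝ) * ((level v - 1).choose ℓ)) else 0 := by
            intro i hi
            have hvi : v i = true := by simpa using hi
            have hlup : level (Function.update v i false) = level v - 1 := by
              show (Finset.univ.filter (fun j => Function.update v i false j = true)).card = _
              rw [ones_update_false, Finset.card_erase_of_mem (by simpa using hvi), hlv]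
            rw [if_neg (by rintro ⟨h, -⟩; exact hne h), ih, hlup]
            congr 1
            simp only [eq_iff_iff]
            constructor
            · rintro ⟨hs, hc⟩
              refine ⟨?_, hc⟩
              by_contra hb
              have hb' : v1 i = true := by simpa using hb
              have := hs i hb'
              simp [Function.update_apply] at this
            · rintro ⟨hf, hc⟩
              refine ⟨fun j hj => ?_, hc⟩
              rcases eq_or_ne j i with rfl | hji
              · rw [hf] at hj; exact absurd hj (by simp)
              · simp [Function.update_apply, hji]; exact hsub j hj
          rw [Finset.sum_congr rfl hterm]
          by_cases hw' : level v - 1 < ℓ + w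
          · -- summand = if v1 i = false then c else 0
            have hsum : ∑ i ∈ Finset.univ.filter (fun i => v i = true),
                (if v1 i = false ∧ level v - 1 < ℓ + w
                 then 1 / ((ℓ : ℝ) * ((level v - 1).choose ℓ)) else 0)
                = ((level v - ℓ : ℕ) : ℝ) * (1 / ((ℓ : ℝ) * ((level v - 1).choose ℓ))) := by
              simp only [hw', and_true]
              rw [← Finset.sum_filter, Finset.sum_const, nsmul_eq_mul]
              congr 2
              have hsetseq : (Finset.univ.filter (fun i => v i = true)).filter
                  (fun i => v1 i = false)
                  = (Finset.univ.filter (fun i => v i = true))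
                    \ (Finset.univ.filter (fun i => v1 i = true)) := by
                ext j
                simp only [mem_filter, mem_sdiff, mem_univ, true_and]
                constructor
                · rintro ⟨h1, h2⟩; exact ⟨h1, by simp [h2]⟩
                · rintro ⟨h1, h2⟩; exact ⟨h1, by cases h : v1 j; rfl; exact absurd h h2⟩
              rw [hsetseq, Finset.card_sdiff_of_subset (by
                intro j hj
                simp only [mem_filter, mem_univ, true_and] at *
                exact hsub j hj), ← hlv]
              have hA : #(Finset.univ.filter (fun i => v1 i = true)) = ℓ := hlev
              rw [hA]
            rw [hsum, if_pos ⟨hsub, by omega⟩]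
            -- arithmetic
            have hmpos : 1 ≤ level v := by omega
            have hℓm1 : ℓ ≤ level v - 1 := by omega
            have key : (level v - ℓ) * (level v).choose ℓ
                = level v * (level v - 1).choose ℓ := by
              have h1 := Nat.add_one_mul_choose_eq (level v - 1) ℓ
              have hm1 : level v - 1 + 1 = level v := by omega
              rw [hm1] at h1
              have h2 := Nat.choose_succ_right_eq (level v) ℓ
              rw [h1, h2, Nat.mul_comm]
            have keyR : ((level v : ℝ) - ℓ) * ((level v).choose ℓ)
                = (level v : ℝ) * ((level v - 1).choose ℓ) := by
              have := congrArg (fun k : ℕ => (k : ℝ)) key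
              push_cast [Nat.cast_sub hle] at this ⊢
              convert this using 2
            have c1 : ((level v : ℝ)) ≠ 0 := by
              simp only [ne_eq, Nat.cast_eq_zero]; omega
            have c2 : ((ℓ : ℝ)) ≠ 0 := by
              simp only [ne_eq, Nat.cast_eq_zero]; omega
            have c3 : (((level v - 1).choose ℓ : ℕ) : ℝ) ≠ 0 := by
              simp only [ne_eq, Nat.cast_eq_zero]
              exact Nat.choose_pos hℓm1 |>.ne'
            have c4 : (((level v).choose ℓ : ℕ) : ℝ) ≠ 0 := by
              simp only [ne_eq, Nat.cast_eq_zero]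
              exact Nat.choose_pos hle |>.ne'
            rw [hlv] at *
            push_cast [Nat.cast_sub hle]
            field_simp
            linear_combination keyR
          · rw [if_neg (by rintro ⟨-, hc⟩; omega)]
            rw [Finset.sum_congr rfl (fun i hi => if_neg (by rintro ⟨-, hc⟩; exact hw' hc)),
              Finset.sum_const_zero, mul_zero]
      · rw [if_neg (by rintro ⟨hs, -⟩; exact hsub hs)]
        push_neg at hsub
        obtain ⟨j, hj1, hj2⟩ := hsub
        have hterm : ∀ i ∈ Finset.univ.filter (fun i => v i = true),
            (if v = v1 ∧ Function.update v i false = v2 then (1:ℝ)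
             else hitProb n v1 v2 w (Function.update v i false)) = 0 := by
          intro i hi
          have hvi : v i = true := by simpa using hi
          have hij : j ≠ i := by intro h; rw [h] at hj2; exact hj2 hvi
          rw [if_neg, ih, if_neg]
          · rintro ⟨hs, -⟩
            have := hs j hj1
            simp [Function.update_apply, hij] at this
            exact hj2 this
          · rintro ⟨h, -⟩
            rw [h] at hj2
            exact hj2 hj1
        rw [Finset.sum_congr rfl hterm, Finset.sum_const_zero, mul_zero]

def boolEquiv (n : ℕ) : Finset (Fin n) ≃ (Fin n → Bool) where
  toFun s := fun i => decide (i ∈ s)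
  invFun x := Finset.univ.filter (fun i => x i = true)
  left_inv s := by ext i; simp
  right_inv x := by funext i; simp

lemma aux_choose_id (n ℓ : ℕ) (hℓn : ℓ ≤ n) (hℓ : 1 ≤ ℓ) (m : ℕ) :
    ((n-ℓ).choose m : ℝ) * (1/((ℓ:ℝ)*(((ℓ+m).choose ℓ : ℕ) : ℝ)))
      = ((n.choose (ℓ+m)):ℝ)/((ℓ:ℝ)*((n.choose ℓ : ℕ) : ℝ)) := by
  have h : n.choose (ℓ+m) * (ℓ+m).choose ℓ = n.choose ℓ * (n-ℓ).choose m := by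
    rcases le_or_gt (ℓ+m) n with h | h
    · have h2 := Nat.choose_mul (n := n) (Nat.le_add_right ℓ m)
      simpa [Nat.add_sub_cancel_left] using h2
    · rw [Nat.choose_eq_zero_of_lt h, Nat.choose_eq_zero_of_lt (show n - ℓ < m by omega), Nat.zero_mul,
        Nat.mul_zero]
  have c2 : ((ℓ:ℝ)) ≠ 0 := by positivity
  have c5 : (((ℓ+m).choose ℓ : ℕ):ℝ) ≠ 0 := by
    simp only [ne_eq, Nat.cast_eq_zero]
    exact (Nat.choose_pos (Nat.le_add_right ℓ m)).ne'
  have c6 : ((n.choose ℓ : ℕ):ℝ) ≠ 0 := by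
    simp only [ne_eq, Nat.cast_eq_zero]
    exact (Nat.choose_pos hℓn).ne'
  have hR : (n.choose (ℓ+m) : ℝ) * (((ℓ+m).choose ℓ : ℕ) : ℝ)
      = (n.choose ℓ : ℝ) * (((n-ℓ).choose m : ℕ) : ℝ) := by exact_mod_cast h
  field_simp
  linear_combination (-1:ℝ) * hR

lemma aux_sum (n w ℓ : ℕ) (hℓ : 1 ≤ ℓ) (hℓn : ℓ ≤ n) (A : Finset (Fin n))
    (hcardA : A.card = ℓ) :
    ∑ s : Finset (Fin n), (if A ⊆ s ∧ s.card < ℓ + w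
          then 1 / ((ℓ:ℝ) * ((s.card.choose ℓ : ℕ) : ℝ)) else 0)
      = (∑ j ∈ Finset.Ico ℓ (ℓ + w), (n.choose j : ℝ)) / ((ℓ : ℝ) * (n.choose ℓ : ℝ)) := by
  have h2 : ∑ s : Finset (Fin n), (if A ⊆ s ∧ s.card < ℓ + w
          then 1 / ((ℓ:ℝ) * ((s.card.choose ℓ : ℕ) : ℝ)) else 0)
      = ∑ s ∈ Finset.univ.filter (fun s : Finset (Fin n) => A ⊆ s),
          (if A ⊆ s ∧ s.card < ℓ + w
          then 1 / ((ℓ:ℝ) * ((s.card.choose ℓ : ℕ) : ℝ)) else 0) := by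
    rw [Finset.sum_filter_of_ne]
    intro s _ hne
    by_contra hns
    exact hne (if_neg (fun hc => hns hc.1))
  have h3 : ∑ s ∈ Finset.univ.filter (fun s : Finset (Fin n) => A ⊆ s),
          (if A ⊆ s ∧ s.card < ℓ + w
          then 1 / ((ℓ:ℝ) * ((s.card.choose ℓ : ℕ) : ℝ)) else 0)
      = ∑ t ∈ Aᶜ.powerset,
          (if ℓ + t.card < ℓ + w
           then 1 / ((ℓ:ℝ) * (((ℓ + t.card).choose ℓ : ℕ) : ℝ)) else 0) := by
    apply Finset.sum_nbij' (i := fun s => s \ A) (j := fun t => A ∪ t)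
    · intro s hs
      rw [Finset.mem_powerset]
      intro x hx
      rw [Finset.mem_compl]
      exact (Finset.mem_sdiff.mp hx).2
    · intro t ht
      rw [Finset.mem_filter]
      exact ⟨Finset.mem_univ _, Finset.subset_union_left⟩
    · intro s hs
      rw [Finset.mem_filter] at hs
      exact Finset.union_sdiff_of_subset hs.2
    · intro t ht
      rw [Finset.mem_powerset] at ht
      rw [Finset.union_sdiff_left, Finset.sdiff_eq_self_of_disjoint]
      exact Finset.disjoint_left.mpr (fun a ha => by
        have := ht ha; rw [Finset.mem_compl] at this; exact this)
    · intro s hs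
      rw [Finset.mem_filter] at hs
      have hcs : ℓ + (s \ A).card = s.card := by
        have := Finset.card_sdiff_add_card_eq_card hs.2
        omega
      rw [hcs]
      rcases lt_or_ge s.card (ℓ+w) with h | h
      · rw [if_pos ⟨hs.2, h⟩, if_pos h]
      · rw [if_neg (by rintro ⟨-,hc⟩; omega), if_neg (by omega)]
  have hcardAc : Aᶜ.card = n - ℓ := by
    rw [Finset.card_compl, hcardA]
    simp
  have h4 : ∑ t ∈ Aᶜ.powerset,
          (if ℓ + t.card < ℓ + w
           then 1 / ((ℓ:ℝ) * (((ℓ + t.card).choose ℓ : ℕ) : ℝ)) else 0)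
      = ∑ m ∈ Finset.range (n - ℓ + 1), (n-ℓ).choose m •
          (if ℓ + m < ℓ + w
           then 1 / ((ℓ:ℝ) * (((ℓ + m).choose ℓ : ℕ) : ℝ)) else 0) := by
    have h := Finset.sum_powerset_apply_card
      (f := fun m => if ℓ + m < ℓ + w
           then 1 / ((ℓ:ℝ) * (((ℓ + m).choose ℓ : ℕ) : ℝ)) else 0) (x := Aᶜ)
    rw [hcardAc] at h
    exact h
  have h5 : ∑ m ∈ Finset.range (n - ℓ + 1), (n-ℓ).choose m •
          (if ℓ + m < ℓ + w
           then 1 / ((ℓ:ℝ) * (((ℓ + m).choose ℓ : ℕ) : ℝ)) else 0)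
      = (∑ j ∈ Finset.Ico ℓ (ℓ + w), (n.choose j : ℝ)) / ((ℓ : ℝ) * (n.choose ℓ : ℝ)) := by
    have hterm : ∀ m : ℕ, (n-ℓ).choose m •
          (if ℓ + m < ℓ + w
           then 1 / ((ℓ:ℝ) * (((ℓ + m).choose ℓ : ℕ) : ℝ)) else 0)
        = if m < w then ((n.choose (ℓ+m)):ℝ)/((ℓ:ℝ)*((n.choose ℓ : ℕ) : ℝ)) else 0 := by
      intro m
      rw [nsmul_eq_mul]
      by_cases hm : m < w
      · rw [if_pos (by omega : ℓ + m < ℓ + w), if_pos hm]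
        exact aux_choose_id n ℓ hℓn hℓ m
      · rw [if_neg (by omega), if_neg hm, mul_zero]
    simp only [hterm]
    rw [← Finset.sum_filter]
    have hss : (Finset.range (n - ℓ + 1)).filter (fun m => m < w) ⊆ Finset.range w := by
      intro m hm
      rw [Finset.mem_filter] at hm
      exact Finset.mem_range.mpr hm.2
    have hvan : ∀ m ∈ Finset.range w,
        m ∉ (Finset.range (n - ℓ + 1)).filter (fun m => m < w) →
        ((n.choose (ℓ+m)):ℝ)/((ℓ:ℝ)*((n.choose ℓ : ℕ) : ℝ)) = 0 := by
      intro m hm hnm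
      rw [Finset.mem_range] at hm
      rw [Finset.mem_filter, Finset.mem_range, not_and_or, not_lt, not_lt] at hnm
      rw [Nat.choose_eq_zero_of_lt (show n < ℓ + m by omega)]
      simp
    rw [Finset.sum_subset hss hvan]
    rw [← Finset.sum_div]
    congr 1
    rw [Finset.sum_Ico_eq_sum_range]
    simp
  rw [h2, h3, h4, h5]

/-- Let `n, w ≥ 1`, let `e = (v1, v2)` be a hypercube edge with `v2 ≺ v1` and
`L(v1) = ℓ ≥ 1`.  The probability that the random descending walk of length `w`
started at a uniformly random point of `{0,1}^n` traverses `e` equals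
`(Σ_{j=ℓ}^{ℓ+w−1} C(n,j)) / (2^n · ℓ · C(n,ℓ))` (with `C(n,j) = 0` for `j > n`). -/
theorem descending_walk_edge_probability (n w : ℕ) (hn : 1 ≤ n) (hw : 1 ≤ w)
    (v1 v2 : Fin n → Bool) (ℓ : ℕ)
    (hedge : ∃ i, v1 i = true ∧ v2 = Function.update v1 i false)
    (hlev : level v1 = ℓ) (hℓ : 1 ≤ ℓ) :
    (1 / 2 ^ n) * ∑ x : Fin n → Bool, hitProb n v1 v2 w x
      = (∑ j ∈ Finset.Ico ℓ (ℓ + w), (n.choose j : ℝ)) /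
          (2 ^ n * (ℓ : ℝ) * (n.choose ℓ : ℝ)) := by
  obtain ⟨i0, hi0, hv2⟩ := hedge
  have hℓn : ℓ ≤ n := by
    rw [← hlev]
    exact le_trans (Finset.card_filter_le _ _) (le_of_eq (by simp))
  set A := Finset.univ.filter (fun i => v1 i = true) with hA
  have hcardA : A.card = ℓ := hlev
  have h1 : ∑ x : Fin n → Bool, hitProb n v1 v2 w x
      = ∑ s : Finset (Fin n), (if A ⊆ s ∧ s.card < ℓ + w
          then 1 / ((ℓ:ℝ) * ((s.card.choose ℓ : ℕ) : ℝ)) else 0) := by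
    rw [← Equiv.sum_comp (boolEquiv n) (hitProb n v1 v2 w)]
    refine Finset.sum_congr rfl (fun s _ => ?_)
    rw [hitProb_eq v1 v2 i0 hi0 hv2 ℓ hlev hℓ w ((boolEquiv n) s)]
    have hfs : Finset.univ.filter (fun i => (boolEquiv n) s i = true) = s := by
      ext i
      simp [boolEquiv]
    have hl : level ((boolEquiv n) s) = s.card := by
      show (Finset.univ.filter (fun i => (boolEquiv n) s i = true)).card = s.card
      rw [hfs]
    rw [hl]
    congr 1
    simp only [eq_iff_iff, and_congr_left_iff]
    intro _
    constructor
    · intro h i hi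
      rw [hA, Finset.mem_filter] at hi
      simpa [boolEquiv] using h i hi.2
    · intro h i hvi
      show decide (i ∈ s) = true
      simp only [decide_eq_true_eq]
      exact h (by rw [hA, Finset.mem_filter]; exact ⟨Finset.mem_univ i, hvi⟩)
  rw [h1, aux_sum n w ℓ hℓ hℓn A hcardA]
  have c1 : ((2:ℝ))^n ≠ 0 := by positivity
  have c2 : ((ℓ:ℝ)) ≠ 0 := by positivity
  have c3 : ((n.choose ℓ:ℕ):ℝ) ≠ 0 := by
    simp only [ne_eq, Nat.cast_eq_zero]
    exact (Nat.choose_pos hℓn).ne'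
  field_simp
end
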